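/- For each natural number n, let a(n) be the number of n×n matrices A with natural-number entries all equal to 0 or 1 (A i j ≤ 1 for all i, j) such that A is nilpotent. Then a(0) = 1 and for every n ≥ 1 one has, as integers, a(n) = ∑_{k=1}^{n} (−1)^{k−1} · C(n,k) · 2^{k(n−k)} · a(n−k), where C(n,k) is the binomial coefficient. -/

import Mathlib

open Relation Finset

def Acyc {α : Type*} (r : α → α → Prop) : Prop := ∀ i, ¬ Relation.TransGen r i i

lemma acyc_congr {α : Type*} {r r' : α → α → Prop} (h : ∀ i j, r i j ↔ r' i j) :
    Acyc r ↔ Acyc r' := by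
  have : r = r' := by funext i j; exact propext (h i j)
  rw [this]

lemma walk_transGen {α : Type*} {R : α → α → Prop} (f : ℕ → α) (m : ℕ)
    (hf : ∀ t < m, R (f t) (f (t+1))) :
    ∀ s t, s < t → t ≤ m → Relation.TransGen R (f s) (f t) := by
  intro s t hst htm
  induction t, hst using Nat.le_induction with
  | base => exact .single (hf s (by omega))
  | succ t hst ih => exact (ih (by omega)).tail (hf t (by omega))

section matrices
variable {n : ℕ} (A : Matrix (Fin n) (Fin n) ℕ)

lemma pow_entry_walk : ∀ (m : ℕ) (i j : Fin n), (A ^ m) i j ≠ 0 →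
    ∃ f : ℕ → Fin n, f 0 = i ∧ f m = j ∧ ∀ t < m, A (f t) (f (t+1)) ≠ 0 := by
  intro m
  induction m with
  | zero =>
    intro i j h
    rw [pow_zero, Matrix.one_apply] at h
    have hij : i = j := by by_contra hc; simp [hc] at h
    exact ⟨fun _ => i, rfl, hij ▸ rfl, by omega⟩
  | succ m ih =>
    intro i j h
    rw [pow_succ, Matrix.mul_apply] at h
    obtain ⟨x, _, hx⟩ := Finset.exists_ne_zero_of_sum_ne_zero h
    rw [Nat.mul_ne_zero_iff] at hx
    obtain ⟨f, hf0, hfm, hfe⟩ := ih i x hx.1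
    refine ⟨fun t => if t = m + 1 then j else f t, by simp [hf0], by simp, ?_⟩
    intro t ht
    by_cases htm : t = m
    · subst htm
      simpa [Nat.ne_of_lt ht, hfm] using hx.2
    · have h1 : t ≠ m + 1 := by omega
      have h2 : t + 1 ≠ m + 1 := by omega
      simpa [h1, h2, htm] using hfe t (by omega)

lemma acyc_pow_n_eq_zero (h : Acyc (fun i j => A i j ≠ 0)) : A ^ n = 0 := by
  ext i j
  by_contra hz
  obtain ⟨f, hf0, hfm, hfe⟩ := pow_entry_walk A n i j hz
  have hcard : Fintype.card (Fin n) < Fintype.card (Fin (n+1)) := by simp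
  obtain ⟨s, t, hst, heq⟩ :=
    Fintype.exists_ne_map_eq_of_card_lt (fun t : Fin (n+1) => f t.1) hcard
  rcases Nat.lt_or_ge s.1 t.1 with hlt | hge
  · have hw := walk_transGen (R := fun i j => A i j ≠ 0) f n hfe s.1 t.1 hlt (by omega)
    rw [heq] at hw
    exact h (f t.1) hw
  · have hlt : t.1 < s.1 := by
      rcases Nat.lt_or_ge t.1 s.1 with h' | h'
      · exact h'
      · exact absurd (Fin.ext (by omega)) hst
    have hw := walk_transGen (R := fun i j => A i j ≠ 0) f n hfe t.1 s.1 hlt (by omega)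
    rw [← heq] at hw
    exact h (f s.1) hw

lemma entry_pow_add {p q : ℕ} {i j k : Fin n} (hp : (A ^ p) i j ≠ 0) (hq : (A ^ q) j k ≠ 0) :
    (A ^ (p + q)) i k ≠ 0 := by
  rw [pow_add, Matrix.mul_apply]
  intro h0
  rw [Finset.sum_eq_zero_iff] at h0
  exact Nat.mul_ne_zero hp hq (h0 j (Finset.mem_univ j))

lemma transGen_entry_pow {i j : Fin n}
    (h : Relation.TransGen (fun i j => A i j ≠ 0) i j) :
    ∃ m, 1 ≤ m ∧ (A ^ m) i j ≠ 0 := by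
  induction h with
  | single hb => exact ⟨1, le_refl 1, by simpa [pow_one] using hb⟩
  | tail _ hbc ih =>
    obtain ⟨m, hm1, hm⟩ := ih
    exact ⟨m + 1, by omega, entry_pow_add A hm (by simpa [pow_one] using hbc)⟩

lemma nilpotent_iff_acyc : IsNilpotent A ↔ Acyc (fun i j => A i j ≠ 0) := by
  constructor
  · rintro ⟨m, hm⟩ i hcyc
    obtain ⟨c, hc1, hc⟩ := transGen_entry_pow A hcyc
    have hbig : ∀ k : ℕ, (A ^ (c * (k + 1))) i i ≠ 0 := by
      intro k
      induction k with
      | zero => simpa using hc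
      | succ k ih =>
        have : c * (k + 2) = c * (k + 1) + c := by ring
        rw [this]
        exact entry_pow_add A ih hc
    have hz : A ^ (c * (m + 1)) = 0 := by
      have hle : m ≤ c * (m + 1) := by nlinarith
      have : c * (m + 1) = m + (c * (m + 1) - m) := by omega
      rw [this, pow_add, hm, Matrix.zero_mul]
    exact hbig m (by rw [hz]; simp)
  · intro h
    exact ⟨n, acyc_pow_n_eq_zero A h⟩

end matrices

lemma card_matrix_eq (n : ℕ) :
    Nat.card {A : Matrix (Fin n) (Fin n) ℕ // (∀ i j, A i j ≤ 1) ∧ IsNilpotent A}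
      = Nat.card {r : Fin n → Fin n → Bool // Acyc fun i j => r i j = true} := by
  apply Nat.card_congr
  refine ⟨fun A => ⟨fun i j => decide (A.1 i j ≠ 0), ?_⟩,
          fun r => ⟨Matrix.of (fun i j => if r.1 i j then 1 else 0), ?_, ?_⟩, ?_, ?_⟩
  · have := (nilpotent_iff_acyc A.1).mp A.2.2
    exact (acyc_congr (by intro i j; simp)).mpr this
  · intro i j; dsimp; split <;> simp
  · rw [nilpotent_iff_acyc]
    refine (acyc_congr ?_).mp r.2
    intro i j; dsimp; split <;> simp_all
  · intro A
    apply Subtype.ext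
    ext i j
    have hb := A.2.1 i j
    simp only [Matrix.of_apply]
    by_cases h : A.1 i j = 0 <;> simp [h] <;> omega
  · intro r
    apply Subtype.ext
    funext i j
    dsimp
    by_cases h : r.1 i j <;> simp [h]

noncomputable def aRel (m : ℕ) : ℕ :=
  Nat.card {r : Fin m → Fin m → Bool // Acyc fun i j => r i j = true}

lemma card_acyc_eq {α : Type*} [Fintype α] (m : ℕ) (e : α ≃ Fin m) :
    Nat.card {r : α → α → Bool // Acyc fun i j => r i j = true} = aRel m := by
  apply Nat.card_congr
  refine ⟨fun r => ⟨fun i j => r.1 (e.symm i) (e.symm j), ?_⟩,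
          fun r => ⟨fun i j => r.1 (e i) (e j), ?_⟩, ?_, ?_⟩
  · intro i hi
    exact r.2 (e.symm i) (hi.lift e.symm (fun a b h => by simpa using h))
  · intro i hi
    exact r.2 (e i) (hi.lift e (fun a b h => by simpa using h))
  · intro r; apply Subtype.ext; funext i j; simp
  · intro r; apply Subtype.ext; funext i j; simp

lemma transGen_restrict {n : ℕ} {S : Finset (Fin n)} {r : Fin n → Fin n → Bool}
    (hs : ∀ i ∈ S, ∀ j, r i j = false) {a b : Fin n}
    (hab : Relation.TransGen (fun i j => r i j = true) a b) (ha : a ∉ S) :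
    ∀ hb : b ∉ S,
      Relation.TransGen (fun x y : {v : Fin n // v ∉ S} => r x.1 y.1 = true) ⟨a, ha⟩ ⟨b, hb⟩ := by
  induction hab with
  | single h => exact fun hb => .single h
  | @tail b c hab h ih =>
    intro hc
    have hb : b ∉ S := fun hbS => by simp [hs b hbS] at h
    exact (ih hb).tail h

lemma acyc_of_compl {n : ℕ} {S : Finset (Fin n)} {r : Fin n → Fin n → Bool}
    (hs : ∀ i ∈ S, ∀ j, r i j = false)
    (h : Acyc fun x y : {v : Fin n // v ∉ S} => r x.1 y.1 = true) :
    Acyc fun i j => r i j = true := by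
  intro i hcyc
  obtain ⟨c, hic, -⟩ := (Relation.TransGen.head'_iff).mp hcyc
  have hi : i ∉ S := fun hiS => by simp [hs i hiS] at hic
  exact h ⟨i, hi⟩ (transGen_restrict hs hcyc hi hi)

lemma exists_sink {n : ℕ} (hn : 1 ≤ n) {r : Fin n → Fin n → Bool}
    (h : Acyc fun i j => r i j = true) : ∃ i, ∀ j, r i j = false := by
  haveI : IsTrans (Fin n) (fun a b : Fin n => Relation.TransGen (fun i j => r i j = true) b a) :=
    ⟨fun _ _ _ hab hbc => Relation.TransGen.trans hbc hab⟩
  haveI : IsIrrefl (Fin n) (fun a b : Fin n => Relation.TransGen (fun i j => r i j = true) b a) := ⟨h⟩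
  have hwf := Finite.wellFounded_of_trans_of_irrefl
    (fun a b : Fin n => Relation.TransGen (fun i j => r i j = true) b a)
  obtain ⟨m, -, hm⟩ := hwf.has_min Set.univ ⟨⟨0, hn⟩, trivial⟩
  refine ⟨m, fun j => ?_⟩
  by_contra hj
  exact hm j trivial (.single (by simpa using hj))

lemma card_fixed (n : ℕ) (S : Finset (Fin n)) :
    Nat.card {r : Fin n → Fin n → Bool //
        (Acyc fun i j => r i j = true) ∧ ∀ i ∈ S, ∀ j, r i j = false}
      = 2 ^ (S.card * (n - S.card)) * aRel (n - S.card) := by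
  classical
  have hcardC : Fintype.card {v : Fin n // v ∉ S} = n - S.card := by
    simp [Fintype.card_subtype_compl, Fintype.card_coe]
  have hcardT : Fintype.card {v : Fin n // v ∈ S} = S.card := Fintype.card_coe S
  have key : Nat.card {r : Fin n → Fin n → Bool //
        (Acyc fun i j => r i j = true) ∧ ∀ i ∈ S, ∀ j, r i j = false}
      = Nat.card ((({v : Fin n // v ∉ S} × {v : Fin n // v ∈ S}) → Bool) ×
          {r' : {v : Fin n // v ∉ S} → {v : Fin n // v ∉ S} → Bool //
            Acyc fun x y => r' x y = true}) := by
    apply Nat.card_congr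
    refine ⟨fun r => ⟨fun p => r.1 p.1.1 p.2.1, ⟨fun x y => r.1 x.1 y.1, ?_⟩⟩,
            fun g => ⟨fun i j =>
              if hi : i ∈ S then false
              else if hj : j ∈ S then g.1 (⟨i, hi⟩, ⟨j, hj⟩)
              else g.2.1 ⟨i, hi⟩ ⟨j, hj⟩, ?_, ?_⟩, ?_, ?_⟩
    · intro x hx
      exact r.2.1 x.1 (hx.lift Subtype.val (fun a b h => h))
    · apply acyc_of_compl (S := S)
      · intro i hi j; simp [hi]
      · intro x hx
        refine g.2.2 x (hx.lift id (fun a b h => ?_))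
        simpa [a.2, b.2, Function.onFun] using h
    · intro i hi j; simp [hi]
    · intro r
      apply Subtype.ext
      funext i j
      dsimp
      by_cases hi : i ∈ S
      · simp [hi, r.2.2 i hi j]
      · by_cases hj : j ∈ S <;> simp [hi, hj]
    · intro g
      ext p
      · dsimp
        rw [dif_neg p.1.2, dif_pos p.2.2]
      · dsimp
        rw [dif_neg, dif_neg]
  rw [key, Nat.card_prod, Nat.card_eq_fintype_card, Fintype.card_fun,
    Fintype.card_prod, hcardC, hcardT, Fintype.card_bool,
    card_acyc_eq (n - S.card) (Fintype.equivFinOfCardEq hcardC), Nat.mul_comm (n - S.card) S.card]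

lemma key_sum (n : ℕ) (hn : 1 ≤ n) :
    ∑ k ∈ Finset.range (n + 1),
      (-1 : ℤ) ^ k * (n.choose k : ℤ) * 2 ^ (k * (n - k)) * (aRel (n - k) : ℤ) = 0 := by
  classical
  set sinks : (Fin n → Fin n → Bool) → Finset (Fin n) :=
    fun r => univ.filter (fun i => ∀ j, r i j = false) with hsinks
  set D : Finset (Fin n → Fin n → Bool) :=
    univ.filter (fun r => Acyc fun i j => r i j = true) with hD
  have step1 : ∑ r ∈ D, ∑ S ∈ (sinks r).powerset, (-1 : ℤ) ^ S.card = 0 := by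
    apply Finset.sum_eq_zero
    intro r hr
    rw [Finset.sum_powerset_neg_one_pow_card, if_neg]
    obtain ⟨i, hi⟩ := exists_sink hn ((Finset.mem_filter.mp hr).2)
    intro hempty
    have : i ∈ sinks r := by simp [hsinks, hi]
    simp [hempty] at this
  have step2 : ∀ r : Fin n → Fin n → Bool,
      (sinks r).powerset = (univ : Finset (Fin n)).powerset.filter (· ⊆ sinks r) := by
    intro r
    ext S
    simp [Finset.mem_powerset, Finset.subset_univ]
  have step3 : ∑ r ∈ D, ∑ S ∈ (sinks r).powerset, (-1 : ℤ) ^ S.card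
      = ∑ S ∈ (univ : Finset (Fin n)).powerset,
          (-1 : ℤ) ^ S.card * ((D.filter (fun r => S ⊆ sinks r)).card : ℤ) := by
    calc ∑ r ∈ D, ∑ S ∈ (sinks r).powerset, (-1 : ℤ) ^ S.card
        = ∑ r ∈ D, ∑ S ∈ (univ : Finset (Fin n)).powerset,
            (if S ⊆ sinks r then (-1 : ℤ) ^ S.card else 0) := by
          refine Finset.sum_congr rfl fun r _ => ?_
          rw [step2 r, Finset.sum_filter]
      _ = ∑ S ∈ (univ : Finset (Fin n)).powerset, ∑ r ∈ D,
            (if S ⊆ sinks r then (-1 : ℤ) ^ S.card else 0) := Finset.sum_comm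
      _ = _ := by
          refine Finset.sum_congr rfl fun S _ => ?_
          rw [← Finset.sum_filter, Finset.sum_const, nsmul_eq_mul, mul_comm]
  have step5 : ∀ S : Finset (Fin n),
      ((D.filter (fun r => S ⊆ sinks r)).card : ℤ)
        = 2 ^ (S.card * (n - S.card)) * (aRel (n - S.card) : ℤ) := by
    intro S
    have hfe : D.filter (fun r => S ⊆ sinks r)
        = univ.filter (fun r : Fin n → Fin n → Bool =>
            (Acyc fun i j => r i j = true) ∧ ∀ i ∈ S, ∀ j, r i j = false) := by
      rw [hD, Finset.filter_filter]
      apply Finset.filter_congr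
      intro r _
      simp [hsinks, Finset.subset_iff]
    have hcard : (D.filter (fun r => S ⊆ sinks r)).card
        = Nat.card {r : Fin n → Fin n → Bool //
            (Acyc fun i j => r i j = true) ∧ ∀ i ∈ S, ∀ j, r i j = false} := by
      rw [hfe, Nat.card_eq_fintype_card, Fintype.card_subtype]
    rw [hcard, card_fixed n S]
    push_cast
    ring
  rw [step3] at step1
  rw [← step1]
  have huniv : (univ : Finset (Fin n)).card = n := by simp
  rw [Finset.sum_powerset, huniv]
  refine Finset.sum_congr rfl fun k hk => ?_
  have hsum : ∀ S ∈ Finset.powersetCard k (univ : Finset (Fin n)),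
      (-1 : ℤ) ^ S.card * ((D.filter (fun r => S ⊆ sinks r)).card : ℤ)
        = (-1 : ℤ) ^ k * (2 ^ (k * (n - k)) * (aRel (n - k) : ℤ)) := by
    intro S hS
    have hSc : S.card = k := (Finset.mem_powersetCard.mp hS).2
    rw [step5 S, hSc]
  rw [Finset.sum_congr rfl hsum, Finset.sum_const, Finset.card_powersetCard, huniv,
    nsmul_eq_mul]
  push_cast
  ring

theorem card_nilpotent_boolean_matrices_recurrence
    (a : ℕ → ℕ)
    (ha : ∀ n, a n =
      Nat.card {A : Matrix (Fin n) (Fin n) ℕ // (∀ i j, A i j ≤ 1) ∧ IsNilpotent A}) :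
    a 0 = 1 ∧
      ∀ n, 1 ≤ n →
        (a n : ℤ) =
          ∑ k ∈ Finset.Icc 1 n,
            (-1 : ℤ) ^ (k - 1) * (n.choose k : ℤ) * 2 ^ (k * (n - k)) * (a (n - k) : ℤ) := by
  have haR : ∀ m, a m = aRel m := fun m => (ha m).trans (card_matrix_eq m)
  constructor
  · rw [haR 0]
    unfold aRel
    rw [Nat.card_eq_one_iff_unique]
    refine ⟨⟨fun x y => Subtype.ext (funext fun i => i.elim0)⟩,
      ⟨⟨fun i _ => i.elim0, fun i => i.elim0⟩⟩⟩
  · intro n hn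
    have hsplit : Finset.range (n + 1) = insert 0 (Finset.Icc 1 n) := by
      ext x; simp [Finset.mem_Icc]; omega
    have h0 := key_sum n hn
    rw [hsplit, Finset.sum_insert (by simp)] at h0
    have hF0 : (-1 : ℤ) ^ 0 * (n.choose 0 : ℤ) * 2 ^ (0 * (n - 0)) * (aRel (n - 0) : ℤ)
        = (aRel n : ℤ) := by simp
    rw [hF0] at h0
    calc (a n : ℤ) = (aRel n : ℤ) := by rw [haR]
      _ = -∑ k ∈ Finset.Icc 1 n,
            (-1 : ℤ) ^ k * (n.choose k : ℤ) * 2 ^ (k * (n - k)) * (aRel (n - k) : ℤ) := by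
          linarith
      _ = ∑ k ∈ Finset.Icc 1 n,
            (-1 : ℤ) ^ (k - 1) * (n.choose k : ℤ) * 2 ^ (k * (n - k)) * (a (n - k) : ℤ) := by
          rw [← Finset.sum_neg_distrib]
          refine Finset.sum_congr rfl fun k hk => ?_
          obtain ⟨hk1, -⟩ := Finset.mem_Icc.mp hk
          obtain ⟨j, rfl⟩ : ∃ j, k = j + 1 := ⟨k - 1, by omega⟩
          rw [haR (n - (j + 1))]
          simp only [Nat.add_sub_cancel, pow_succ]
          ring
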